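/- Let p be an odd prime and n', m, r positive integers with 3r ≤ m. Let f': 𝔽_p^{n'} → ℝ, and for each x ∈ 𝔽_p^{n'} let v₁(x), …, v_r(x) ∈ 𝔽_p^m and h_x: 𝔽_p^r → ℝ with 𝔼_{w∈𝔽_p^r}[h_x(w)] = 0. Assume that for all pairwise distinct a, b, c ∈ 𝔽_p^{n'}, the 3r vectors v_j(a), v_j(b), v_j(c) (1 ≤ j ≤ r) are linearly independent in 𝔽_p^m. Define f: 𝔽_p^{n'} × 𝔽_p^m → ℝ by f(x,y) = f'(x) + h_x(y·v₁(x), …, y·v_r(x)), where y·v denotes the standard dot product. Then for every d = (d*, d') ∈ 𝔽_p^{n'} × 𝔽_p^m with d* ≠ 0, we have 𝔼_{z ∈ 𝔽_p^{n'}×𝔽_p^m}[f(z)f(z+d)f(z+2d)] = 𝔼_{x ∈ 𝔽_p^{n'}}[f'(x)f'(x+d*)f'(x+2d*)]. -/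

import Mathlib

open Finset

lemma dot_surjective {p m : ℕ} [Fact p.Prime] {ι : Type*} [Fintype ι]
    (u : ι → (Fin m → ZMod p)) (hu : LinearIndependent (ZMod p) u) :
    Function.Surjective (fun y : Fin m → ZMod p => (fun q => ∑ i, y i * u q i : ι → ZMod p)) := by
  intro w
  set S := Submodule.span (ZMod p) (Set.range u) with hS
  let B : Module.Basis ι (ZMod p) S := Module.Basis.span hu
  let f₀ : S →ₗ[ZMod p] ZMod p := B.constr (ZMod p) w
  obtain ⟨φ, hφ⟩ := f₀.exists_extend
  refine ⟨fun i => φ (Pi.single i 1), ?_⟩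
  funext q
  have h2 : (∑ i, (u q i) • (Pi.single i 1 : Fin m → ZMod p)) = u q := by
    funext k
    simp [Finset.sum_apply, Pi.single_apply]
  have h1 : (∑ i, φ (Pi.single i 1) * u q i) = φ (u q) := by
    conv_rhs => rw [← h2]
    rw [map_sum]
    refine Finset.sum_congr rfl fun i _ => ?_
    rw [map_smul, smul_eq_mul, mul_comm]
  have hmem : u q ∈ S := Submodule.subset_span (Set.mem_range_self q)
  have h3 : φ (u q) = f₀ ⟨u q, hmem⟩ := by
    rw [← hφ]; rfl
  have h4 : (⟨u q, hmem⟩ : S) = B q := (Module.Basis.span_apply hu q).symm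
  show (∑ i, φ (Pi.single i 1) * u q i) = w q
  rw [h1, h3, h4]
  exact B.constr_basis (ZMod p) w q

lemma sum_affine_fiber {M N : Type*} [AddCommGroup M] [AddCommGroup N]
    [Fintype M] [Fintype N] [DecidableEq N] (Φ : M →+ N) (hs : Function.Surjective Φ) :
    ∃ K : ℕ, ∀ (c : N) (g : N → ℝ), ∑ y, g (Φ y + c) = K * ∑ w, g w := by
  classical
  refine ⟨Fintype.card {y : M // Φ y = 0}, fun c g => ?_⟩
  have hcard : ∀ u : N, (univ.filter fun y : M => Φ y = u).card
      = Fintype.card {y : M // Φ y = 0} := by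
    intro u
    obtain ⟨y0, hy0⟩ := hs u
    have : Fintype.card {y : M // Φ y = u} = Fintype.card {y : M // Φ y = 0} :=
      Fintype.card_congr
        ⟨fun a => ⟨a.1 - y0, by simp [map_sub, a.2, hy0]⟩,
         fun b => ⟨b.1 + y0, by simp [map_add, b.2, hy0]⟩,
         fun a => by simp, fun b => by simp⟩
    simpa [Fintype.card_subtype] using this
  calc ∑ y, g (Φ y + c)
      = ∑ w : N, ∑ y ∈ univ.filter (fun y => Φ y + c = w), g (Φ y + c) :=
        (Finset.sum_fiberwise_of_maps_to (fun y _ => mem_univ _) _).symm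
    _ = ∑ w : N, ∑ _y ∈ univ.filter (fun y => Φ y + c = w), g w := by
        refine Finset.sum_congr rfl fun w _ => Finset.sum_congr rfl fun y hy => ?_
        rw [(Finset.mem_filter.mp hy).2]
    _ = ∑ w : N, ((univ.filter fun y : M => Φ y + c = w).card : ℝ) * g w := by
        simp [Finset.sum_const, nsmul_eq_mul]
    _ = ∑ w : N, (Fintype.card {y : M // Φ y = 0} : ℝ) * g w := by
        refine Finset.sum_congr rfl fun w _ => ?_
        congr 2
        rw [← hcard (w - c)]
        congr 1
        ext y
        simp [eq_sub_iff_add_eq]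
    _ = (Fintype.card {y : M // Φ y = 0} : ℝ) * ∑ w, g w := by rw [← Finset.mul_sum]

/-- The stability lemma: perturbing each fibre by mean-zero functions read off along
generic directions does not change the 3-AP density for common differences that are
nonzero on the first block of coordinates. -/
theorem stability_lemma (p : ℕ) [Fact p.Prime] (hodd : Odd p) (n' m r : ℕ)
    (hn' : 0 < n') (hm : 0 < m) (hr : 0 < r) (hrm : 3 * r ≤ m)
    (f' : (Fin n' → ZMod p) → ℝ)
    (v : (Fin n' → ZMod p) → Fin r → (Fin m → ZMod p))
    (h : (Fin n' → ZMod p) → (Fin r → ZMod p) → ℝ)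
    (hmean : ∀ x, ∑ w : Fin r → ZMod p, h x w = 0)
    (hindep : ∀ a b c : Fin n' → ZMod p, a ≠ b → a ≠ c → b ≠ c →
      LinearIndependent (ZMod p) (fun q : Fin 3 × Fin r => v (![a, b, c] q.1) q.2))
    (f : ((Fin n' → ZMod p) × (Fin m → ZMod p)) → ℝ)
    (hf : ∀ x y, f (x, y) = f' x + h x (fun j => ∑ i, y i * v x j i))
    (dstar : Fin n' → ZMod p) (d' : Fin m → ZMod p) (hd : dstar ≠ 0) :
    (∑ z : (Fin n' → ZMod p) × (Fin m → ZMod p),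
        f z * f (z + (dstar, d')) * f (z + (dstar, d') + (dstar, d'))) / (p : ℝ) ^ (n' + m)
      = (∑ x, f' x * f' (x + dstar) * f' (x + dstar + dstar)) / (p : ℝ) ^ n' := by
  classical
  have hp := (Fact.out : p.Prime)
  -- 2 ≠ 0 in ZMod p
  have h2ne : (2 : ZMod p) ≠ 0 := by
    intro h2
    have : ((2 : ℕ) : ZMod p) = 0 := by push_cast; exact h2
    have hdvd : p ∣ 2 := (ZMod.natCast_eq_zero_iff 2 p).mp this
    have : p = 2 := (Nat.prime_dvd_prime_iff_eq hp Nat.prime_two).mp hdvd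
    rw [this] at hodd
    exact (by decide : ¬ Odd 2) hodd
  have hdd : dstar + dstar ≠ 0 := by
    intro hc
    apply hd
    have h2s : (2 : ZMod p) • dstar = 0 := by rw [two_smul]; exact hc
    rcases smul_eq_zero.mp h2s with h2 | h0
    · exact absurd h2 h2ne
    · exact h0
  -- the key fibrewise computation
  have key : ∀ x : Fin n' → ZMod p,
      ∑ y : Fin m → ZMod p,
        f (x, y) * f (x + dstar, y + d') * f (x + dstar + dstar, y + d' + d')
        = (p : ℝ) ^ m * (f' x * f' (x + dstar) * f' (x + dstar + dstar)) := by
    intro x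
    have hab : x ≠ x + dstar := fun hc => hd (left_eq_add.mp hc)
    have hac : x ≠ x + dstar + dstar := by
      rw [add_assoc]; intro hc; exact hdd (left_eq_add.mp hc)
    have hbc : x + dstar ≠ x + dstar + dstar := fun hc => hd (left_eq_add.mp hc)
    have hli := hindep x (x + dstar) (x + dstar + dstar) hab hac hbc
    set A : Fin 3 → (Fin n' → ZMod p) := ![x, x + dstar, x + dstar + dstar] with hA
    set D : Fin 3 → (Fin m → ZMod p) := ![0, d', d' + d'] with hD
    set Φfun : (Fin m → ZMod p) → (Fin 3 × Fin r → ZMod p) :=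
      fun y q => ∑ k, y k * v (A q.1) q.2 k with hΦfun
    have hΦadd : ∀ y z, Φfun (y + z) = Φfun y + Φfun z := by
      intro y z; funext q
      simp [hΦfun, add_mul, Finset.sum_add_distrib]
    let Φ : (Fin m → ZMod p) →+ (Fin 3 × Fin r → ZMod p) := AddMonoidHom.mk' Φfun hΦadd
    have hsurj : Function.Surjective Φ :=
      dot_surjective (fun q : Fin 3 × Fin r => v (A q.1) q.2) hli
    obtain ⟨K, hK⟩ := sum_affine_fiber Φ hsurj
    set g : (Fin 3 × Fin r → ZMod p) → ℝ :=
      fun w => ∏ i : Fin 3, (f' (A i) + h (A i) (fun j => w (i, j))) with hg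
    set cv : Fin 3 × Fin r → ZMod p :=
      fun q => ∑ k, D q.1 k * v (A q.1) q.2 k with hcv
    have hfac : ∀ (i : Fin 3) (y : Fin m → ZMod p),
        f (A i, y + D i) = f' (A i) + h (A i) (fun j => (Φfun y + cv) (i, j)) := by
      intro i y
      rw [hf]
      congr 1
      congr 1
      funext j
      show ∑ k, (y + D i) k * v (A i) j k = Φfun y (i, j) + cv (i, j)
      simp [hΦfun, hcv, add_mul, Finset.sum_add_distrib]
    have hprod : ∀ y : Fin m → ZMod p,
        f (x, y) * f (x + dstar, y + d') * f (x + dstar + dstar, y + d' + d')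
          = g (Φ y + cv) := by
      intro y
      calc f (x, y) * f (x + dstar, y + d') * f (x + dstar + dstar, y + d' + d')
          = f (A 0, y + D 0) * f (A 1, y + D 1) * f (A 2, y + D 2) := by
            simp [hA, hD, add_assoc]
        _ = ∏ i : Fin 3, f (A i, y + D i) := by rw [Fin.prod_univ_three]
        _ = ∏ i : Fin 3, (f' (A i) + h (A i) (fun j => (Φfun y + cv) (i, j))) :=
            Finset.prod_congr rfl fun i _ => hfac i y
        _ = g (Φ y + cv) := rfl
    have hgsum : ∑ w, g w
        = (p : ℝ) ^ (3 * r) * (f' x * f' (x + dstar) * f' (x + dstar + dstar)) := by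
      have step1 : ∑ w, g w = ∑ u : Fin 3 → (Fin r → ZMod p), g (fun q => u q.1 q.2) := by
        rw [← Equiv.sum_comp ((Equiv.curry (Fin 3) (Fin r) (ZMod p)).symm) g]
        rfl
      have step2 : ∀ u : Fin 3 → (Fin r → ZMod p),
          g (fun q => u q.1 q.2) = ∏ i : Fin 3, (f' (A i) + h (A i) (u i)) := fun u => rfl
      rw [step1]
      simp_rw [step2]
      rw [← Fintype.prod_sum (fun (i : Fin 3) (w1 : Fin r → ZMod p) => f' (A i) + h (A i) w1)]
      have step3 : ∀ i : Fin 3,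
          ∑ w1 : Fin r → ZMod p, (f' (A i) + h (A i) w1) = (p : ℝ) ^ r * f' (A i) := by
        intro i
        rw [Finset.sum_add_distrib, hmean (A i), add_zero, Finset.sum_const]
        have : Fintype.card (Fin r → ZMod p) = p ^ r := by
          simp [Fintype.card_fun, ZMod.card]
        rw [Finset.card_univ, this, nsmul_eq_mul]
        push_cast
        ring
      rw [Finset.prod_congr rfl fun i _ => step3 i, Fin.prod_univ_three]
      have hApow : (p : ℝ) ^ (3 * r) = (p : ℝ) ^ r * (p : ℝ) ^ r * (p : ℝ) ^ r := by
        rw [← pow_add, ← pow_add]; congr 1; ring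
      rw [hApow]
      simp [hA]
      ring
    have hKcard : (K : ℝ) * (p : ℝ) ^ (3 * r) = (p : ℝ) ^ m := by
      have h1 := hK 0 (fun _ => (1 : ℝ))
      have c1 : (∑ _y : Fin m → ZMod p, (1 : ℝ)) = (p : ℝ) ^ m := by
        rw [Finset.sum_const, Finset.card_univ]
        simp [Fintype.card_fun, ZMod.card]
      have c2 : (∑ _w : Fin 3 × Fin r → ZMod p, (1 : ℝ)) = (p : ℝ) ^ (3 * r) := by
        rw [Finset.sum_const, Finset.card_univ]
        simp [Fintype.card_fun, ZMod.card, Fintype.card_prod]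
      rw [c1, c2] at h1
      linarith
    calc ∑ y : Fin m → ZMod p,
          f (x, y) * f (x + dstar, y + d') * f (x + dstar + dstar, y + d' + d')
        = ∑ y : Fin m → ZMod p, g (Φ y + cv) := Finset.sum_congr rfl fun y _ => hprod y
      _ = K * ∑ w, g w := hK cv g
      _ = K * ((p : ℝ) ^ (3 * r) * (f' x * f' (x + dstar) * f' (x + dstar + dstar))) := by
          rw [hgsum]
      _ = (p : ℝ) ^ m * (f' x * f' (x + dstar) * f' (x + dstar + dstar)) := by
          rw [← mul_assoc, hKcard]
  -- assemble
  have hsplit : (∑ z : (Fin n' → ZMod p) × (Fin m → ZMod p),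
      f z * f (z + (dstar, d')) * f (z + (dstar, d') + (dstar, d')))
      = ∑ x : Fin n' → ZMod p, ∑ y : Fin m → ZMod p,
          f (x, y) * f (x + dstar, y + d') * f (x + dstar + dstar, y + d' + d') := by
    rw [Fintype.sum_prod_type]
    exact Finset.sum_congr rfl fun x _ => Finset.sum_congr rfl fun y _ => rfl
  rw [hsplit]
  have : ∑ x : Fin n' → ZMod p, ∑ y : Fin m → ZMod p,
      f (x, y) * f (x + dstar, y + d') * f (x + dstar + dstar, y + d' + d')
      = (p : ℝ) ^ m * ∑ x, f' x * f' (x + dstar) * f' (x + dstar + dstar) := by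
    rw [Finset.mul_sum]
    exact Finset.sum_congr rfl fun x _ => key x
  rw [this, pow_add]
  have hppos : (0 : ℝ) < p := by exact_mod_cast hp.pos
  have hpm : ((p : ℝ) ^ m) ≠ 0 := pow_ne_zero _ (ne_of_gt hppos)
  rw [mul_comm ((p : ℝ) ^ n') ((p : ℝ) ^ m)]
  rw [mul_div_mul_left _ _ hpm]
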